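/- arXiv:2602.14586 — 2 statements merged into one kernel-verified Lean document; each statement's English description precedes it below -/
import Mathlib

section
/- If S is a 2-dimensional totally isotropic subspace of F^8 with S ∩ U_1 = 0 and S ∩ U_2 = 0, then, under the right action of GL_4(F) × F^× via e, S lies either in the orbit of span{e_1+f_3, e_2+f_4} or in the orbit of span{e_1−f_2, e_2+f_1}; moreover these two subspaces lie in distinct orbits. Hence the 2-dimensional totally isotropic subspaces meeting both U_1 and U_2 trivially form exactly two orbits. -/
/-!
Statement 7: If S is a 2-dimensional totally isotropic subspace of F⁸ with
S ∩ U₁ = 0 and S ∩ U₂ = 0, then, under the right action of GL₄(F) × F^× via e, S lies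
either in the orbit of span{e₁+f₃, e₂+f₄} or in the orbit of span{e₁−f₂, e₂+f₁};
moreover these two subspaces lie in distinct orbits. Hence the 2-dimensional totally
isotropic subspaces meeting both U₁ and U₂ trivially form exactly two orbits.
-/

open Matrix

variable (F : Type*) [Field F]

def Ip (n : ℕ) : Matrix (Fin n) (Fin n) F :=
  Matrix.of fun i j => if (i : ℕ) + (j : ℕ) = n - 1 then 1 else 0

def B8 (v w : Fin 8 → F) : F := v ⬝ᵥ ((Ip F 8) *ᵥ w)

def TotallyIsotropic (S : Submodule F (Fin 8 → F)) : Prop :=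
  ∀ v ∈ S, ∀ w ∈ S, B8 F v w = 0

/-- `e(r,a) = block-diag(r, a·I'₄·ᵀr⁻¹·I'₄)`. -/
noncomputable def emap (r : Matrix (Fin 4) (Fin 4) F) (a : F) : Matrix (Fin 8) (Fin 8) F :=
  Matrix.of fun i j =>
    if hi : (i : ℕ) < 4 then
      if hj : (j : ℕ) < 4 then r ⟨(i : ℕ), hi⟩ ⟨(j : ℕ), hj⟩ else 0
    else
      if hj : (j : ℕ) < 4 then 0
      else
        a * (Ip F 4 * r⁻¹ᵀ * Ip F 4)
          ⟨(i : ℕ) - 4, by have := i.isLt; omega⟩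
          ⟨(j : ℕ) - 4, by have := j.isLt; omega⟩

noncomputable def SameOrbit (S T : Submodule F (Fin 8 → F)) : Prop :=
  ∃ (r : Matrix (Fin 4) (Fin 4) F) (a : F), r.det ≠ 0 ∧ a ≠ 0 ∧
    Submodule.map (Matrix.vecMulLinear (emap F r a)) S = T

/- Standard basis vectors of F⁸, labelled e₁,e₂,e₃,e₄,f₄,f₃,f₂,f₁ in this order. -/
def e1 : Fin 8 → F := Pi.single (0 : Fin 8) (1 : F)
def e2 : Fin 8 → F := Pi.single (1 : Fin 8) (1 : F)
def e3 : Fin 8 → F := Pi.single (2 : Fin 8) (1 : F)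
def e4 : Fin 8 → F := Pi.single (3 : Fin 8) (1 : F)
def f4 : Fin 8 → F := Pi.single (4 : Fin 8) (1 : F)
def f3 : Fin 8 → F := Pi.single (5 : Fin 8) (1 : F)
def f2 : Fin 8 → F := Pi.single (6 : Fin 8) (1 : F)
def f1 : Fin 8 → F := Pi.single (7 : Fin 8) (1 : F)

def U1 : Submodule F (Fin 8 → F) := Submodule.span F {e1 F, e2 F, e3 F, e4 F}
def U2 : Submodule F (Fin 8 → F) := Submodule.span F {f1 F, f2 F, f3 F, f4 F}

/-- `span{e₁ + f₃, e₂ + f₄}` -/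
def repA : Submodule F (Fin 8 → F) := Submodule.span F {e1 F + f3 F, e2 F + f4 F}

/-- `span{e₁ − f₂, e₂ + f₁}` -/
def repB : Submodule F (Fin 8 → F) := Submodule.span F {e1 F - f2 F, e2 F + f1 F}

section Helpers

variable {F}

/-! ### Small-dimension helpers -/

/-- first block of an 8-vector -/
def lo (v : Fin 8 → F) : Fin 4 → F := ![v 0, v 1, v 2, v 3]

/-- second block of an 8-vector -/
def hi (v : Fin 8 → F) : Fin 4 → F := ![v 4, v 5, v 6, v 7]

/-- antidiagonal pairing on 4-vectors -/
def Cd (x z : Fin 4 → F) : F := x 0 * z 3 + x 1 * z 2 + x 2 * z 1 + x 3 * z 0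

/-- reversal of a 4-vector -/
def rv (z : Fin 4 → F) : Fin 4 → F := ![z 3, z 2, z 1, z 0]

lemma vec8_five (a b c d e f g h : F) : (![a,b,c,d,e,f,g,h] : Fin 8 → F) 5 = f := rfl
lemma vec8_six (a b c d e f g h : F) : (![a,b,c,d,e,f,g,h] : Fin 8 → F) 6 = g := rfl
lemma vec8_seven (a b c d e f g h : F) : (![a,b,c,d,e,f,g,h] : Fin 8 → F) 7 = h := rfl

lemma dot_rv (x z : Fin 4 → F) : x ⬝ᵥ rv z = Cd x z := by
  simp [rv, dotProduct, Fin.sum_univ_four, Cd]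

lemma Cd_comm (x z : Fin 4 → F) : Cd x z = Cd z x := by simp only [Cd]; ring

lemma B8_formula (v w : Fin 8 → F) :
    B8 F v w = v 0 * w 7 + v 1 * w 6 + v 2 * w 5 + v 3 * w 4
      + v 4 * w 3 + v 5 * w 2 + v 6 * w 1 + v 7 * w 0 := by
  simp (config := { decide := true }) [B8, Ip, mulVec, dotProduct, Fin.sum_univ_eight]

lemma B8_split (v w : Fin 8 → F) :
    B8 F v w = Cd (lo v) (hi w) + Cd (hi v) (lo w) := by
  simp [B8_formula, Cd, lo, hi]; ring

lemma Ip4_entry (N : Matrix (Fin 4) (Fin 4) F) (i j : Fin 4) :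
    (Ip F 4 * Nᵀ * Ip F 4) i j = N ⟨3-(j:ℕ), by omega⟩ ⟨3-(i:ℕ), by omega⟩ := by
  fin_cases i <;> fin_cases j <;>
    simp (config := { decide := true }) [Ip, Matrix.mul_apply, Fin.sum_univ_four, transpose]

lemma Ip4_mul_Ip4 : (Ip F 4) * (Ip F 4) = 1 := by
  ext i j
  fin_cases i <;> fin_cases j <;>
    simp (config := { decide := true }) [Ip, Matrix.mul_apply, Fin.sum_univ_four, Matrix.one_apply]

lemma Cd_eq (x z : Fin 4 → F) : Cd x z = x ⬝ᵥ (Ip F 4 *ᵥ z) := by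
  have h0 : ((0:Fin 4):ℕ) = 0 := rfl
  have h1 : ((1:Fin 4):ℕ) = 1 := rfl
  have h2 : ((2:Fin 4):ℕ) = 2 := rfl
  have h3 : ((3:Fin 4):ℕ) = 3 := rfl
  simp [Cd, dotProduct, mulVec, Fin.sum_univ_four, Ip, h0, h1, h2, h3]

lemma lo_vecMul (v : Fin 8 → F) (r : Matrix (Fin 4) (Fin 4) F) (a : F) :
    lo (v ᵥ* emap F r a) = lo v ᵥ* r := by
  funext j
  fin_cases j <;>
    simp (config := { decide := true }) [lo, vecMul, dotProduct, Fin.sum_univ_eight,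
      Fin.sum_univ_four, emap, Matrix.cons_val_succ] <;>
    first | rfl | exact Or.inl rfl

lemma hi_vecMul (v : Fin 8 → F) (r : Matrix (Fin 4) (Fin 4) F) (a : F) :
    hi (v ᵥ* emap F r a) = hi v ᵥ* (a • (Ip F 4 * r⁻¹ᵀ * Ip F 4)) := by
  funext j
  fin_cases j <;>
    simp (config := { decide := true }) [hi, vecMul, dotProduct, Fin.sum_univ_eight,
      Fin.sum_univ_four, emap, Matrix.cons_val_succ] <;>
    first | rfl | exact Or.inl rfl

lemma Cd_transform (r : Matrix (Fin 4) (Fin 4) F) (hr : r.det ≠ 0) (a : F) (x u : Fin 4 → F) :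
    Cd (x ᵥ* r) (u ᵥ* (a • (Ip F 4 * r⁻¹ᵀ * Ip F 4))) = a * Cd x u := by
  have hru : r * r⁻¹ = 1 := Matrix.mul_nonsing_inv r (by simpa using hr)
  rw [Cd_eq, Cd_eq, ← mulVec_transpose (a • (Ip F 4 * r⁻¹ᵀ * Ip F 4)) u,
    mulVec_mulVec, dotProduct_mulVec, vecMul_vecMul]
  have key : r * (Ip F 4 * (a • (Ip F 4 * r⁻¹ᵀ * Ip F 4))ᵀ) = a • Ip F 4 := by
    rw [Matrix.transpose_smul, Matrix.mul_smul, Matrix.mul_smul]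
    congr 1
    have hsymm : (Ip F 4)ᵀ = Ip F 4 := by
      ext i j; simp [Ip, Matrix.transpose_apply, Nat.add_comm]
    rw [Matrix.transpose_mul, Matrix.transpose_mul, Matrix.transpose_transpose, hsymm]
    calc r * (Ip F 4 * (Ip F 4 * (r⁻¹ * Ip F 4)))
        = r * ((Ip F 4 * Ip F 4) * (r⁻¹ * Ip F 4)) := by rw [Matrix.mul_assoc]
      _ = (r * r⁻¹) * Ip F 4 := by rw [Ip4_mul_Ip4, Matrix.one_mul, Matrix.mul_assoc]
      _ = Ip F 4 := by rw [hru, Matrix.one_mul]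
  rw [← Matrix.mul_assoc, Matrix.mul_assoc, key]
  have hsm : x ᵥ* (a • Ip F 4) = a • (x ᵥ* Ip F 4) := by
    funext j; simp [vecMul, dotProduct, Finset.mul_sum, Matrix.smul_apply]
    exact Finset.sum_congr rfl fun i _ => by ring
  rw [hsm, smul_dotProduct, ← dotProduct_mulVec, smul_eq_mul]

/-! ### Linear algebra helpers -/

lemma surj_of_li (c d : Fin 4 → F) (h : LinearIndependent F ![c, d]) :
    Function.Surjective (Matrix.of ![c, d]).mulVecLin := by
  set A : Matrix (Fin 2) (Fin 4) F := Matrix.of ![c, d] with hA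
  have hinj : Function.Injective (Aᵀ.mulVecLin) := by
    rw [← LinearMap.ker_eq_bot, LinearMap.ker_eq_bot']
    intro w hw
    have hw0 : w 0 • c + w 1 • d = 0 := by
      have h1 : Aᵀ *ᵥ w = w ᵥ* A := mulVec_transpose A w
      have h2 : w ᵥ* A = 0 := by rw [← h1]; exact hw
      have h3 : w ᵥ* A = w 0 • A 0 + w 1 • A 1 := by
        funext j; simp [vecMul, dotProduct, Fin.sum_univ_two]
      rw [h3] at h2
      exact h2
    have := Fintype.linearIndependent_iff.mp h w ?_
    · funext i; fin_cases i <;> simp [this 0, this 1]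
    · simpa [Fin.sum_univ_two] using hw0
  have hrk : A.rank = 2 := by
    have h1 : Aᵀ.rank = 2 := by
      rw [Matrix.rank, LinearMap.finrank_range_of_inj hinj]
      simp
    rw [← Matrix.rank_transpose]; exact h1
  rw [← LinearMap.range_eq_top]
  apply Submodule.eq_top_of_finrank_eq
  rw [← Matrix.rank, hrk]
  simp

lemma exists_dual_pair (c d : Fin 4 → F) (h : LinearIndependent F ![c, d]) :
    ∃ z0 z1 : Fin 4 → F, c ⬝ᵥ z0 = 1 ∧ d ⬝ᵥ z0 = 0 ∧ c ⬝ᵥ z1 = 0 ∧ d ⬝ᵥ z1 = 1 := by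
  obtain ⟨z0, hz0⟩ := surj_of_li c d h (Pi.single 0 1)
  obtain ⟨z1, hz1⟩ := surj_of_li c d h (Pi.single 1 1)
  refine ⟨z0, z1, ?_, ?_, ?_, ?_⟩
  · have := congrFun hz0 0; simpa [mulVec, dotProduct] using this
  · have := congrFun hz0 1; simpa [mulVec, dotProduct, Pi.single_apply] using this
  · have := congrFun hz1 0; simpa [mulVec, dotProduct, Pi.single_apply] using this
  · have := congrFun hz1 1; simpa [mulVec, dotProduct] using this

lemma exists_ker_pair (c d : Fin 4 → F) (h : LinearIndependent F ![c, d]) :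
    ∃ y0 y1 : Fin 4 → F, LinearIndependent F ![y0, y1] ∧
      c ⬝ᵥ y0 = 0 ∧ d ⬝ᵥ y0 = 0 ∧ c ⬝ᵥ y1 = 0 ∧ d ⬝ᵥ y1 = 0 := by
  set A : Matrix (Fin 2) (Fin 4) F := Matrix.of ![c, d] with hA
  have hsurj := surj_of_li c d h
  set K := LinearMap.ker A.mulVecLin with hK
  have hfr : Module.finrank F K = 2 := by
    have := LinearMap.finrank_range_add_finrank_ker A.mulVecLin
    rw [LinearMap.range_eq_top.mpr hsurj] at this
    rw [finrank_top] at this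
    have h4 : Module.finrank F (Fin 4 → F) = 4 := by simp
    have h2' : Module.finrank F (Fin 2 → F) = 2 := by simp
    rw [h4, h2'] at this
    have h5 : 2 + Module.finrank F ↥K = 4 := this
    omega
  let b := Module.finBasisOfFinrankEq F K hfr
  have hbi : LinearIndependent F (fun i : Fin 2 => ((b i : Fin 4 → F))) :=
    b.linearIndependent.map' K.subtype K.ker_subtype
  refine ⟨b 0, b 1, ?_, ?_, ?_, ?_, ?_⟩
  case _ =>
    have heq : ![((b 0 : Fin 4 → F)), (b 1 : Fin 4 → F)] = fun i : Fin 2 => ((b i : Fin 4 → F)) := by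
      funext i; fin_cases i <;> rfl
    rw [heq]; exact hbi
  case _ =>
    have hm : A *ᵥ ((b 0 : Fin 4 → F)) = 0 := LinearMap.mem_ker.mp (b 0).2
    have := congrFun hm 0; simpa [mulVec, dotProduct, hA] using this
  case _ =>
    have hm : A *ᵥ ((b 0 : Fin 4 → F)) = 0 := LinearMap.mem_ker.mp (b 0).2
    have := congrFun hm 1; simpa [mulVec, dotProduct, hA] using this
  case _ =>
    have hm : A *ᵥ ((b 1 : Fin 4 → F)) = 0 := LinearMap.mem_ker.mp (b 1).2
    have := congrFun hm 0; simpa [mulVec, dotProduct, hA] using this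
  case _ =>
    have hm : A *ᵥ ((b 1 : Fin 4 → F)) = 0 := LinearMap.mem_ker.mp (b 1).2
    have := congrFun hm 1; simpa [mulVec, dotProduct, hA] using this

lemma det_ne_zero_of_rows (x0 x1 x2 x3 : Fin 4 → F)
    (h : ∀ g : Fin 4 → F, g 0 • x0 + g 1 • x1 + g 2 • x2 + g 3 • x3 = 0 → ∀ i, g i = 0) :
    (Matrix.of ![x0, x1, x2, x3]).det ≠ 0 := by
  set r : Matrix (Fin 4) (Fin 4) F := Matrix.of ![x0, x1, x2, x3] with hr
  have hli : LinearIndependent F (fun i => r i) := by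
    rw [Fintype.linearIndependent_iff]
    intro g hg i
    apply h g _ i
    have : ∑ i : Fin 4, g i • r i = g 0 • x0 + g 1 • x1 + g 2 • x2 + g 3 • x3 := by
      simp [Fin.sum_univ_four, hr]
      rfl
    rw [← this]; exact hg
  have := Matrix.linearIndependent_rows_iff_isUnit.mp hli
  have := (Matrix.isUnit_iff_isUnit_det r).mp this
  exact this.ne_zero

lemma inv_col (r : Matrix (Fin 4) (Fin 4) F) (hr : r.det ≠ 0) (c : Fin 4 → F) (k : Fin 4)
    (hc : r *ᵥ c = Pi.single k 1) : ∀ i, r⁻¹ i k = c i := by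
  intro i
  have h1 : r⁻¹ *ᵥ (r *ᵥ c) = c := by
    rw [mulVec_mulVec, Matrix.nonsing_inv_mul r (by simpa using hr), one_mulVec]
  rw [hc, Matrix.mulVec_single] at h1
  have := congrFun h1 i
  simpa using this

/-! ### Membership in the reference subspaces -/

lemma mem_U1_iff (v : Fin 8 → F) :
    v ∈ U1 F ↔ v 4 = 0 ∧ v 5 = 0 ∧ v 6 = 0 ∧ v 7 = 0 := by
  constructor
  · intro hv
    induction hv using Submodule.span_induction with
    | mem x hx =>
      rcases hx with rfl | rfl | rfl | rfl <;>
        simp (config := { decide := true }) [e1, e2, e3, e4, Pi.single_apply]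
    | zero => simp
    | add x y hx hy ihx ihy =>
      exact ⟨by simp [ihx.1, ihy.1], by simp [ihx.2.1, ihy.2.1],
        by simp [ihx.2.2.1, ihy.2.2.1], by simp [ihx.2.2.2, ihy.2.2.2]⟩
    | smul a x hx ihx =>
      exact ⟨by simp [ihx.1], by simp [ihx.2.1], by simp [ihx.2.2.1], by simp [ihx.2.2.2]⟩
  · rintro ⟨h4, h5, h6, h7⟩
    have hv : v = v 0 • e1 F + v 1 • e2 F + v 2 • e3 F + v 3 • e4 F := by
      funext i
      fin_cases i <;>
        simp (config := { decide := true }) [e1, e2, e3, e4, Pi.single_apply, h4, h5, h6, h7]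
    rw [hv]
    have m1 : e1 F ∈ U1 F := Submodule.subset_span (by simp)
    have m2 : e2 F ∈ U1 F := Submodule.subset_span (by simp)
    have m3 : e3 F ∈ U1 F := Submodule.subset_span (by simp)
    have m4 : e4 F ∈ U1 F := Submodule.subset_span (by simp)
    exact Submodule.add_mem _ (Submodule.add_mem _ (Submodule.add_mem _
      (Submodule.smul_mem _ _ m1) (Submodule.smul_mem _ _ m2))
      (Submodule.smul_mem _ _ m3)) (Submodule.smul_mem _ _ m4)

lemma mem_U2_iff (v : Fin 8 → F) :
    v ∈ U2 F ↔ v 0 = 0 ∧ v 1 = 0 ∧ v 2 = 0 ∧ v 3 = 0 := by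
  constructor
  · intro hv
    induction hv using Submodule.span_induction with
    | mem x hx =>
      rcases hx with rfl | rfl | rfl | rfl <;>
        simp (config := { decide := true }) [f1, f2, f3, f4, Pi.single_apply]
    | zero => simp
    | add x y hx hy ihx ihy =>
      exact ⟨by simp [ihx.1, ihy.1], by simp [ihx.2.1, ihy.2.1],
        by simp [ihx.2.2.1, ihy.2.2.1], by simp [ihx.2.2.2, ihy.2.2.2]⟩
    | smul a x hx ihx =>
      exact ⟨by simp [ihx.1], by simp [ihx.2.1], by simp [ihx.2.2.1], by simp [ihx.2.2.2]⟩
  · rintro ⟨h0, h1, h2, h3⟩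
    have hv : v = v 7 • f1 F + v 6 • f2 F + v 5 • f3 F + v 4 • f4 F := by
      funext i
      fin_cases i <;>
        simp (config := { decide := true }) [f1, f2, f3, f4, Pi.single_apply, h0, h1, h2, h3]
    rw [hv]
    have m1 : f1 F ∈ U2 F := Submodule.subset_span (by simp)
    have m2 : f2 F ∈ U2 F := Submodule.subset_span (by simp)
    have m3 : f3 F ∈ U2 F := Submodule.subset_span (by simp)
    have m4 : f4 F ∈ U2 F := Submodule.subset_span (by simp)
    exact Submodule.add_mem _ (Submodule.add_mem _ (Submodule.add_mem _
      (Submodule.smul_mem _ _ m1) (Submodule.smul_mem _ _ m2))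
      (Submodule.smul_mem _ _ m3)) (Submodule.smul_mem _ _ m4)

lemma range_pair (p q : Fin 8 → F) : Set.range ![p, q] = {p, q} := by
  ext x
  constructor
  · rintro ⟨i, rfl⟩; fin_cases i <;> simp
  · rintro (rfl | rfl)
    · exact ⟨0, rfl⟩
    · exact ⟨1, rfl⟩

lemma coordA (s t : F) (i : Fin 8) :
    (s • (e1 F + f3 F) + t • (e2 F + f4 F)) i = ![s, t, 0, 0, t, s, 0, 0] i := by
  fin_cases i <;>
    simp (config := { decide := true }) [e1, e2, f3, f4, Pi.single_apply,
      Matrix.cons_val_succ] <;> rfl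

lemma coordB (s t : F) (i : Fin 8) :
    (s • (e1 F - f2 F) + t • (e2 F + f1 F)) i = ![s, t, 0, 0, 0, 0, -s, t] i := by
  fin_cases i <;>
    simp (config := { decide := true }) [e1, e2, f1, f2, Pi.single_apply,
      Matrix.cons_val_succ] <;> rfl


lemma eq_of_blocks (p q : Fin 8 → F) (h1 : lo p = lo q) (h2 : hi p = hi q) : p = q := by
  funext i
  fin_cases i
  exacts [congrFun h1 0, congrFun h1 1, congrFun h1 2, congrFun h1 3,
          congrFun h2 0, congrFun h2 1, congrFun h2 2, congrFun h2 3]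

lemma vecMul_unit0 (r : Matrix (Fin 4) (Fin 4) F) : (![1,0,0,0] : Fin 4 → F) ᵥ* r = r 0 := by
  funext j; simp [vecMul, dotProduct, Fin.sum_univ_four]

lemma vecMul_unit1 (r : Matrix (Fin 4) (Fin 4) F) : (![0,1,0,0] : Fin 4 → F) ᵥ* r = r 1 := by
  funext j; simp [vecMul, dotProduct, Fin.sum_univ_four]

lemma vecMul_unit2neg (r : Matrix (Fin 4) (Fin 4) F) :
    (![0,0,-1,0] : Fin 4 → F) ᵥ* r = -(r 2) := by
  funext j; simp [vecMul, dotProduct, Fin.sum_univ_four]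

lemma vecMul_unit3 (r : Matrix (Fin 4) (Fin 4) F) : (![0,0,0,1] : Fin 4 → F) ᵥ* r = r 3 := by
  funext j; simp [vecMul, dotProduct, Fin.sum_univ_four]

lemma Ip4_conj (N : Matrix (Fin 4) (Fin 4) F) :
    Ip F 4 * Nᵀ * Ip F 4 = Matrix.of ![![N 3 3, N 2 3, N 1 3, N 0 3],
                                        ![N 3 2, N 2 2, N 1 2, N 0 2],
                                        ![N 3 1, N 2 1, N 1 1, N 0 1],
                                        ![N 3 0, N 2 0, N 1 0, N 0 0]] := by
  ext i j
  fin_cases i <;> fin_cases j <;>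
    simp (config := { decide := true }) [Ip, Matrix.mul_apply, Fin.sum_univ_four, transpose]

lemma blockA1lo : lo (e1 F + f3 F) = ![1,0,0,0] := by
  funext i; fin_cases i <;> simp (config := { decide := true }) [lo, e1, f3, Pi.single_apply]

lemma blockA1hi : hi (e1 F + f3 F) = ![0,1,0,0] := by
  funext i; fin_cases i <;> simp (config := { decide := true }) [hi, e1, f3, Pi.single_apply]

lemma blockA2lo : lo (e2 F + f4 F) = ![0,1,0,0] := by
  funext i; fin_cases i <;> simp (config := { decide := true }) [lo, e2, f4, Pi.single_apply]

lemma blockA2hi : hi (e2 F + f4 F) = ![1,0,0,0] := by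
  funext i; fin_cases i <;> simp (config := { decide := true }) [hi, e2, f4, Pi.single_apply]

lemma blockB1lo : lo (e1 F - f2 F) = ![1,0,0,0] := by
  funext i; fin_cases i <;> simp (config := { decide := true }) [lo, e1, f2, Pi.single_apply]

lemma blockB1hi : hi (e1 F - f2 F) = ![0,0,-1,0] := by
  funext i; fin_cases i <;> simp (config := { decide := true }) [hi, e1, f2, Pi.single_apply]

lemma blockB2lo : lo (e2 F + f1 F) = ![0,1,0,0] := by
  funext i; fin_cases i <;> simp (config := { decide := true }) [lo, e2, f1, Pi.single_apply]

lemma blockB2hi : hi (e2 F + f1 F) = ![0,0,0,1] := by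
  funext i; fin_cases i <;> simp (config := { decide := true }) [hi, e2, f1, Pi.single_apply]

lemma orbit_helper (p q v w : Fin 8 → F) (S : Submodule F (Fin 8 → F))
    (hspan : Submodule.span F {v, w} = S) (r : Matrix (Fin 4) (Fin 4) F) (a : F)
    (hdet : r.det ≠ 0) (ha : a ≠ 0)
    (hp : p ᵥ* emap F r a = v) (hq : q ᵥ* emap F r a = w) :
    SameOrbit F (Submodule.span F {p, q}) S := by
  refine ⟨r, a, hdet, ha, ?_⟩
  rw [Submodule.map_span, Set.image_insert_eq, Set.image_singleton]
  simp only [Matrix.vecMulLinear_apply]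
  rw [hp, hq, hspan]

lemma classify (h2 : (2 : F) ≠ 0) (S : Submodule F (Fin 8 → F)) (hiso : TotallyIsotropic F S)
    (hrk : Module.finrank F S = 2) (hSU1 : S ⊓ U1 F = ⊥) (hSU2 : S ⊓ U2 F = ⊥) :
    SameOrbit F (repA F) S ∨ SameOrbit F (repB F) S := by
  classical
  -- extract a basis v, w of S
  let b := Module.finBasisOfFinrankEq F S hrk
  set v : Fin 8 → F := (b 0 : Fin 8 → F) with hv_def
  set w : Fin 8 → F := (b 1 : Fin 8 → F) with hw_def
  have hv : v ∈ S := (b 0).2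
  have hw : w ∈ S := (b 1).2
  have hbi : LinearIndependent F (fun i : Fin 2 => ((b i : Fin 8 → F))) :=
    b.linearIndependent.map' S.subtype S.ker_subtype
  have hvw : LinearIndependent F ![v, w] := by
    have heq : ![v, w] = fun i : Fin 2 => ((b i : Fin 8 → F)) := by
      funext i; fin_cases i <;> rfl
    rw [heq]; exact hbi
  have hspan : Submodule.span F {v, w} = S := by
    have h1 : Submodule.span F (Set.range ⇑b) = (⊤ : Submodule F S) := b.span_eq
    have hmt : Submodule.map S.subtype (Submodule.span F (Set.range ⇑b)) = S := by
      rw [h1, Submodule.map_subtype_top]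
    rw [Submodule.map_span] at hmt
    have h3 : S.subtype '' Set.range ⇑b = {v, w} := by
      ext x
      simp only [Set.mem_image, Set.mem_range]
      constructor
      · rintro ⟨y, ⟨i, rfl⟩, rfl⟩
        fin_cases i
        · left; rfl
        · right; rfl
      · rintro (rfl | rfl)
        · exact ⟨b 0, ⟨0, rfl⟩, rfl⟩
        · exact ⟨b 1, ⟨1, rfl⟩, rfl⟩
    rw [h3] at hmt; exact hmt
  set x1 : Fin 4 → F := lo v with hx1
  set u1 : Fin 4 → F := hi v with hu1
  set x2 : Fin 4 → F := lo w with hx2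
  set u2 : Fin 4 → F := hi w with hu2
  -- linear independence of the blocks
  have hx_li : LinearIndependent F ![x1, x2] := by
    rw [LinearIndependent.pair_iff]
    intro s t hst
    have hq : s • v + t • w ∈ S := Submodule.add_mem S (S.smul_mem s hv) (S.smul_mem t hw)
    have hqU2 : s • v + t • w ∈ U2 F := by
      rw [mem_U2_iff]
      refine ⟨?_, ?_, ?_, ?_⟩
      · have := congrFun hst 0; simpa [hx1, hx2, lo] using this
      · have := congrFun hst 1; simpa [hx1, hx2, lo] using this
      · have := congrFun hst 2; simpa [hx1, hx2, lo] using this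
      · have := congrFun hst 3; simpa [hx1, hx2, lo] using this
    have hq0 : s • v + t • w = 0 := by
      have hm : s • v + t • w ∈ S ⊓ U2 F := Submodule.mem_inf.mpr ⟨hq, hqU2⟩
      rw [hSU2] at hm
      exact (Submodule.mem_bot F).mp hm
    exact LinearIndependent.pair_iff.mp hvw s t hq0
  have hu_li : LinearIndependent F ![u1, u2] := by
    rw [LinearIndependent.pair_iff]
    intro s t hst
    have hq : s • v + t • w ∈ S := Submodule.add_mem S (S.smul_mem s hv) (S.smul_mem t hw)
    have hqU1 : s • v + t • w ∈ U1 F := by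
      rw [mem_U1_iff]
      refine ⟨?_, ?_, ?_, ?_⟩
      · have := congrFun hst 0; simpa [hu1, hu2, hi] using this
      · have := congrFun hst 1; simpa [hu1, hu2, hi] using this
      · have := congrFun hst 2; simpa [hu1, hu2, hi] using this
      · have := congrFun hst 3; simpa [hu1, hu2, hi] using this
    have hq0 : s • v + t • w = 0 := by
      have hm : s • v + t • w ∈ S ⊓ U1 F := Submodule.mem_inf.mpr ⟨hq, hqU1⟩
      rw [hSU1] at hm
      exact (Submodule.mem_bot F).mp hm
    exact LinearIndependent.pair_iff.mp hvw s t hq0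
  -- isotropy relations
  have hc11 : Cd x1 u1 = 0 := by
    have h := hiso v hv v hv
    rw [B8_split, Cd_comm (hi v) (lo v)] at h
    have h' : 2 * Cd x1 u1 = 0 := by rw [two_mul]; exact h
    rcases mul_eq_zero.mp h' with h'' | h''
    · exact absurd h'' h2
    · exact h''
  have hc22 : Cd x2 u2 = 0 := by
    have h := hiso w hw w hw
    rw [B8_split, Cd_comm (hi w) (lo w)] at h
    have h' : 2 * Cd x2 u2 = 0 := by rw [two_mul]; exact h
    rcases mul_eq_zero.mp h' with h'' | h''
    · exact absurd h'' h2
    · exact h''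
  have hrel : Cd x1 u2 + Cd x2 u1 = 0 := by
    have h := hiso v hv w hw
    rw [B8_split, Cd_comm (hi v) (lo w)] at h
    exact h
  set bb : F := Cd x1 u2 with hbb
  have hc21 : Cd x2 u1 = -bb := eq_neg_of_add_eq_zero_right hrel
  by_cases hb : bb = 0
  · -- Case A : the beta form vanishes
    left
    have hcli : LinearIndependent F ![rv u1, rv u2] := by
      rw [LinearIndependent.pair_iff]
      intro s t hst
      have h' : s • u1 + t • u2 = 0 := by
        funext i
        fin_cases i
        · have := congrFun hst 3; simpa [rv] using this
        · have := congrFun hst 2; simpa [rv] using this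
        · have := congrFun hst 1; simpa [rv] using this
        · have := congrFun hst 0; simpa [rv] using this
      exact LinearIndependent.pair_iff.mp hu_li s t h'
    obtain ⟨z2, z3, hz1, hz2, hz3, hz4⟩ := exists_dual_pair _ _ hcli
    have hz1' : z2 ⬝ᵥ rv u1 = 1 := by rw [dotProduct_comm]; exact hz1
    have hz2' : z2 ⬝ᵥ rv u2 = 0 := by rw [dotProduct_comm]; exact hz2
    have hz3' : z3 ⬝ᵥ rv u1 = 0 := by rw [dotProduct_comm]; exact hz3
    have hz4' : z3 ⬝ᵥ rv u2 = 1 := by rw [dotProduct_comm]; exact hz4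
    have hd11 : x1 ⬝ᵥ rv u1 = 0 := by rw [dot_rv]; exact hc11
    have hd12 : x1 ⬝ᵥ rv u2 = 0 := by rw [dot_rv, ← hbb]; exact hb
    have hd21 : x2 ⬝ᵥ rv u1 = 0 := by rw [dot_rv, hc21, hb, neg_zero]
    have hd22 : x2 ⬝ᵥ rv u2 = 0 := by rw [dot_rv]; exact hc22
    set r : Matrix (Fin 4) (Fin 4) F := Matrix.of ![x1, x2, z2, z3] with hrdef
    have hdet : r.det ≠ 0 := by
      rw [hrdef]
      apply det_ne_zero_of_rows
      intro g hg
      have hA := congrArg (fun y => y ⬝ᵥ rv u1) hg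
      have hB := congrArg (fun y => y ⬝ᵥ rv u2) hg
      simp only [add_dotProduct, smul_dotProduct, zero_dotProduct, smul_eq_mul,
        hd11, hd12, hd21, hd22, hz1', hz2', hz3', hz4',
        mul_zero, mul_one, zero_add, add_zero] at hA hB
      have hg' : g 0 • x1 + g 1 • x2 = 0 := by
        have h := hg
        rw [hA, hB, zero_smul, zero_smul, add_zero, add_zero] at h
        exact h
      obtain ⟨hg0, hg1⟩ := LinearIndependent.pair_iff.mp hx_li _ _ hg'
      intro i
      fin_cases i
      exacts [hg0, hg1, hA, hB]
    have hcv2 : r *ᵥ rv u1 = Pi.single 2 1 := by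
      funext i
      fin_cases i
      · show x1 ⬝ᵥ rv u1 = _
        rw [hd11]; simp (config := { decide := true }) [Pi.single_apply]
      · show x2 ⬝ᵥ rv u1 = _
        rw [hd21]; simp (config := { decide := true }) [Pi.single_apply]
      · show z2 ⬝ᵥ rv u1 = _
        rw [hz1']; simp (config := { decide := true }) [Pi.single_apply]
      · show z3 ⬝ᵥ rv u1 = _
        rw [hz3']; simp (config := { decide := true }) [Pi.single_apply]
    have hcv3 : r *ᵥ rv u2 = Pi.single 3 1 := by
      funext i
      fin_cases i
      · show x1 ⬝ᵥ rv u2 = _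
        rw [hd12]; simp (config := { decide := true }) [Pi.single_apply]
      · show x2 ⬝ᵥ rv u2 = _
        rw [hd22]; simp (config := { decide := true }) [Pi.single_apply]
      · show z2 ⬝ᵥ rv u2 = _
        rw [hz2']; simp (config := { decide := true }) [Pi.single_apply]
      · show z3 ⬝ᵥ rv u2 = _
        rw [hz4']; simp (config := { decide := true }) [Pi.single_apply]
    have hcol2 : ∀ i, r⁻¹ i 2 = rv u1 i := inv_col r hdet (rv u1) 2 hcv2
    have hcol3 : ∀ i, r⁻¹ i 3 = rv u2 i := inv_col r hdet (rv u2) 3 hcv3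
    have hEA1 : (e1 F + f3 F) ᵥ* emap F r 1 = v := by
      apply eq_of_blocks
      · rw [lo_vecMul, blockA1lo, vecMul_unit0]
        rfl
      · rw [hi_vecMul, blockA1hi, Ip4_conj, one_smul, vecMul_unit1]
        funext j
        fin_cases j <;> simp [hcol2, rv, hu1, hi]
    have hEA2 : (e2 F + f4 F) ᵥ* emap F r 1 = w := by
      apply eq_of_blocks
      · rw [lo_vecMul, blockA2lo, vecMul_unit1]
        rfl
      · rw [hi_vecMul, blockA2hi, Ip4_conj, one_smul, vecMul_unit0]
        funext j
        fin_cases j <;> simp [hcol3, rv, hu2, hi]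
    rw [repA]
    exact orbit_helper _ _ v w S hspan r 1 hdet one_ne_zero hEA1 hEA2
  · -- Case B : the beta form is nondegenerate
    right
    set c0 : Fin 4 → F := bb⁻¹ • rv u2 with hc0def
    set c1 : Fin 4 → F := (-bb⁻¹) • rv u1 with hc1def
    have hd10 : x1 ⬝ᵥ c0 = 1 := by
      rw [hc0def, dotProduct_smul, dot_rv, ← hbb, smul_eq_mul, inv_mul_cancel₀ hb]
    have hd20 : x2 ⬝ᵥ c0 = 0 := by
      rw [hc0def, dotProduct_smul, dot_rv, hc22, smul_eq_mul, mul_zero]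
    have hd11' : x1 ⬝ᵥ c1 = 0 := by
      rw [hc1def, dotProduct_smul, dot_rv, hc11, smul_eq_mul, mul_zero]
    have hd21' : x2 ⬝ᵥ c1 = 1 := by
      rw [hc1def, dotProduct_smul, dot_rv, hc21, smul_eq_mul]
      rw [neg_mul_neg, inv_mul_cancel₀ hb]
    have hcli : LinearIndependent F ![c0, c1] := by
      rw [LinearIndependent.pair_iff]
      intro s t hst
      have hA := congrArg (fun y => x1 ⬝ᵥ y) hst
      have hB := congrArg (fun y => x2 ⬝ᵥ y) hst
      simp only [dotProduct_add, dotProduct_smul, smul_eq_mul, dotProduct_zero,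
        hd10, hd20, hd11', hd21', mul_zero, mul_one, add_zero, zero_add] at hA hB
      exact ⟨hA, hB⟩
    obtain ⟨y2, y3, hy_li, hk1, hk2, hk3, hk4⟩ := exists_ker_pair c0 c1 hcli
    have hk1' : y2 ⬝ᵥ c0 = 0 := by rw [dotProduct_comm]; exact hk1
    have hk2' : y2 ⬝ᵥ c1 = 0 := by rw [dotProduct_comm]; exact hk2
    have hk3' : y3 ⬝ᵥ c0 = 0 := by rw [dotProduct_comm]; exact hk3
    have hk4' : y3 ⬝ᵥ c1 = 0 := by rw [dotProduct_comm]; exact hk4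
    set r : Matrix (Fin 4) (Fin 4) F := Matrix.of ![x1, x2, y2, y3] with hrdef
    have hdet : r.det ≠ 0 := by
      rw [hrdef]
      apply det_ne_zero_of_rows
      intro g hg
      have hA := congrArg (fun y => y ⬝ᵥ c0) hg
      have hB := congrArg (fun y => y ⬝ᵥ c1) hg
      simp only [add_dotProduct, smul_dotProduct, zero_dotProduct, smul_eq_mul,
        hd10, hd20, hd11', hd21', hk1', hk2', hk3', hk4',
        mul_zero, mul_one, zero_add, add_zero] at hA hB
      have hg' : g 2 • y2 + g 3 • y3 = 0 := by
        have h := hg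
        rw [hA, hB, zero_smul, zero_smul, zero_add, zero_add] at h
        exact h
      obtain ⟨hg2, hg3⟩ := LinearIndependent.pair_iff.mp hy_li _ _ hg'
      intro i
      fin_cases i
      exacts [hA, hB, hg2, hg3]
    have hcv0 : r *ᵥ c0 = Pi.single 0 1 := by
      funext i
      fin_cases i
      · show x1 ⬝ᵥ c0 = _
        rw [hd10]; simp (config := { decide := true }) [Pi.single_apply]
      · show x2 ⬝ᵥ c0 = _
        rw [hd20]; simp (config := { decide := true }) [Pi.single_apply]
      · show y2 ⬝ᵥ c0 = _
        rw [hk1']; simp (config := { decide := true }) [Pi.single_apply]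
      · show y3 ⬝ᵥ c0 = _
        rw [hk3']; simp (config := { decide := true }) [Pi.single_apply]
    have hcv1 : r *ᵥ c1 = Pi.single 1 1 := by
      funext i
      fin_cases i
      · show x1 ⬝ᵥ c1 = _
        rw [hd11']; simp (config := { decide := true }) [Pi.single_apply]
      · show x2 ⬝ᵥ c1 = _
        rw [hd21']; simp (config := { decide := true }) [Pi.single_apply]
      · show y2 ⬝ᵥ c1 = _
        rw [hk2']; simp (config := { decide := true }) [Pi.single_apply]
      · show y3 ⬝ᵥ c1 = _
        rw [hk4']; simp (config := { decide := true }) [Pi.single_apply]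
    have hcol0 : ∀ i, r⁻¹ i 0 = c0 i := inv_col r hdet c0 0 hcv0
    have hcol1 : ∀ i, r⁻¹ i 1 = c1 i := inv_col r hdet c1 1 hcv1
    have hEB1 : (e1 F - f2 F) ᵥ* emap F r bb = v := by
      apply eq_of_blocks
      · rw [lo_vecMul, blockB1lo, vecMul_unit0]
        rfl
      · rw [hi_vecMul, blockB1hi, Ip4_conj, vecMul_unit2neg]
        funext j
        fin_cases j <;>
          (simp [Matrix.smul_apply, hcol1, hc1def, rv, hu1, hi, smul_eq_mul]
           field_simp)
    have hEB2 : (e2 F + f1 F) ᵥ* emap F r bb = w := by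
      apply eq_of_blocks
      · rw [lo_vecMul, blockB2lo, vecMul_unit1]
        rfl
      · rw [hi_vecMul, blockB2hi, Ip4_conj, vecMul_unit3]
        funext j
        fin_cases j <;>
          (simp [Matrix.smul_apply, hcol0, hc0def, rv, hu2, hi, smul_eq_mul]
           field_simp)
    rw [repB]
    exact orbit_helper _ _ v w S hspan r bb hdet hb hEB1 hEB2


end Helpers

theorem statement7 (h2 : (2 : F) ≠ 0) :
    (TotallyIsotropic F (repA F) ∧ Module.finrank F ↥(repA F) = 2 ∧
      repA F ⊓ U1 F = ⊥ ∧ repA F ⊓ U2 F = ⊥) ∧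
    (TotallyIsotropic F (repB F) ∧ Module.finrank F ↥(repB F) = 2 ∧
      repB F ⊓ U1 F = ⊥ ∧ repB F ⊓ U2 F = ⊥) ∧
    (∀ S : Submodule F (Fin 8 → F),
        TotallyIsotropic F S → Module.finrank F ↥S = 2 →
        S ⊓ U1 F = ⊥ → S ⊓ U2 F = ⊥ →
        SameOrbit F (repA F) S ∨ SameOrbit F (repB F) S) ∧
    ¬ SameOrbit F (repA F) (repB F) := by
  classical
  have hrangeA : repA F = Submodule.span F (Set.range ![e1 F + f3 F, e2 F + f4 F]) := by
    rw [repA, range_pair]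
  have hrangeB : repB F = Submodule.span F (Set.range ![e1 F - f2 F, e2 F + f1 F]) := by
    rw [repB, range_pair]
  have hliA : LinearIndependent F ![e1 F + f3 F, e2 F + f4 F] := by
    rw [LinearIndependent.pair_iff]
    intro s t hst
    have h0 := congrFun hst 0
    have h1 := congrFun hst 1
    rw [coordA] at h0 h1
    constructor
    · simpa using h0
    · simpa using h1
  have hliB : LinearIndependent F ![e1 F - f2 F, e2 F + f1 F] := by
    rw [LinearIndependent.pair_iff]
    intro s t hst
    have h0 := congrFun hst 0
    have h1 := congrFun hst 1
    rw [coordB] at h0 h1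
    constructor
    · simpa using h0
    · simpa using h1
  refine ⟨⟨?_, ?_, ?_, ?_⟩, ⟨?_, ?_, ?_, ?_⟩, ?_, ?_⟩
  · -- repA totally isotropic
    intro v hv w hw
    rw [repA, Submodule.mem_span_pair] at hv hw
    obtain ⟨s, t, rfl⟩ := hv
    obtain ⟨s', t', rfl⟩ := hw
    rw [B8_formula]
    simp only [coordA]
    simp [vec8_five, vec8_six, vec8_seven]
  · -- finrank repA = 2
    rw [hrangeA, finrank_span_eq_card hliA]
    simp
  · -- repA ⊓ U1 = ⊥
    rw [Submodule.eq_bot_iff]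
    intro v hv
    rw [Submodule.mem_inf] at hv
    obtain ⟨hvA, hvU⟩ := hv
    rw [repA, Submodule.mem_span_pair] at hvA
    obtain ⟨s, t, rfl⟩ := hvA
    rw [mem_U1_iff] at hvU
    have h5 := hvU.2.1
    have h4 := hvU.1
    rw [coordA] at h5 h4
    have hs : s = 0 := by simpa using h5
    have ht : t = 0 := by simpa using h4
    simp [hs, ht]
  · -- repA ⊓ U2 = ⊥
    rw [Submodule.eq_bot_iff]
    intro v hv
    rw [Submodule.mem_inf] at hv
    obtain ⟨hvA, hvU⟩ := hv
    rw [repA, Submodule.mem_span_pair] at hvA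
    obtain ⟨s, t, rfl⟩ := hvA
    rw [mem_U2_iff] at hvU
    have h0 := hvU.1
    have h1 := hvU.2.1
    rw [coordA] at h0 h1
    have hs : s = 0 := by simpa using h0
    have ht : t = 0 := by simpa using h1
    simp [hs, ht]
  · -- repB totally isotropic
    intro v hv w hw
    rw [repB, Submodule.mem_span_pair] at hv hw
    obtain ⟨s, t, rfl⟩ := hv
    obtain ⟨s', t', rfl⟩ := hw
    rw [B8_formula]
    simp only [coordB]
    simp [vec8_five, vec8_six, vec8_seven]
  · -- finrank repB = 2
    rw [hrangeB, finrank_span_eq_card hliB]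
    simp
  · -- repB ⊓ U1 = ⊥
    rw [Submodule.eq_bot_iff]
    intro v hv
    rw [Submodule.mem_inf] at hv
    obtain ⟨hvB, hvU⟩ := hv
    rw [repB, Submodule.mem_span_pair] at hvB
    obtain ⟨s, t, rfl⟩ := hvB
    rw [mem_U1_iff] at hvU
    have h6 := hvU.2.2.1
    have h7 := hvU.2.2.2
    rw [coordB] at h6 h7
    rw [vec8_six] at h6
    rw [vec8_seven] at h7
    have hs : s = 0 := by simpa using h6
    have ht : t = 0 := by simpa using h7
    simp [hs, ht]
  · -- repB ⊓ U2 = ⊥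
    rw [Submodule.eq_bot_iff]
    intro v hv
    rw [Submodule.mem_inf] at hv
    obtain ⟨hvB, hvU⟩ := hv
    rw [repB, Submodule.mem_span_pair] at hvB
    obtain ⟨s, t, rfl⟩ := hvB
    rw [mem_U2_iff] at hvU
    have h0 := hvU.1
    have h1 := hvU.2.1
    rw [coordB] at h0 h1
    have hs : s = 0 := by simpa using h0
    have ht : t = 0 := by simpa using h1
    simp [hs, ht]
  · -- classification
    intro S hiso hrk hSU1 hSU2
    exact classify h2 S hiso hrk hSU1 hSU2
  · -- distinct orbits
    rintro ⟨r, a, hr, ha, hmap⟩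
    have h1 : (e1 F - f2 F) ∈ repB F := by
      rw [repB]; exact Submodule.subset_span (by simp)
    have h2' : (e2 F + f1 F) ∈ repB F := by
      rw [repB]; exact Submodule.subset_span (by simp)
    rw [← hmap] at h1 h2'
    obtain ⟨q, hq, hq1⟩ := h1
    obtain ⟨q', hq', hq2⟩ := h2'
    rw [Matrix.vecMulLinear_apply] at hq1 hq2
    have key := Cd_transform r hr a (lo q) (hi q')
    rw [← lo_vecMul q r a, ← hi_vecMul q' r a, hq1, hq2] at key
    have hL : Cd (lo (e1 F - f2 F)) (hi (e2 F + f1 F)) = 1 := by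
      simp (config := { decide := true }) [Cd, lo, hi, e1, f2, e2, f1, Pi.single_apply]
    rw [SetLike.mem_coe] at hq hq'
    rw [repA, Submodule.mem_span_pair] at hq hq'
    obtain ⟨s, t, rfl⟩ := hq
    obtain ⟨s', t', rfl⟩ := hq'
    have hR : Cd (lo (s • (e1 F + f3 F) + t • (e2 F + f4 F)))
        (hi (s' • (e1 F + f3 F) + t' • (e2 F + f4 F))) = 0 := by
      simp only [Cd, lo, hi, coordA]
      simp [vec8_five, vec8_six, vec8_seven]
    rw [hL, hR, mul_zero] at key
    exact one_ne_zero key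
end

section
/- The stabilizer in GL_4(F) × F^× of the 2-dimensional totally isotropic subspace span{e_1−f_2, e_2+f_1} ⊆ F^8 (for the right action via e) equals exactly the set {(diag(g_1,g_2), det(g_1)) : g_1, g_2 ∈ GL_2(F)}, where diag(g_1,g_2) denotes the block-diagonal 4×4 matrix with g_1 in rows and columns 1–2 and g_2 in rows and columns 3–4. -/
/-!
Statement 8: The stabilizer in GL₄(F) × F^× of the 2-dimensional totally isotropic
subspace span{e₁−f₂, e₂+f₁} ⊆ F⁸ (for the right action via e) equals exactly the set
{(diag(g₁,g₂), det g₁) : g₁, g₂ ∈ GL₂(F)}.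
-/

open Matrix

variable (F : Type*) [Field F]

/-- The block-diagonal 4×4 matrix with `g₁` in rows/columns 1–2 and `g₂` in
rows/columns 3–4. -/
def blockDiag2 (g₁ g₂ : Matrix (Fin 2) (Fin 2) F) : Matrix (Fin 4) (Fin 4) F :=
  !![g₁ 0 0, g₁ 0 1, 0, 0;
     g₁ 1 0, g₁ 1 1, 0, 0;
     0, 0, g₂ 0 0, g₂ 0 1;
     0, 0, g₂ 1 0, g₂ 1 1]

/-! ### Auxiliary lemmas -/

lemma Ip_conj (X : Matrix (Fin 4) (Fin 4) F) (i j : Fin 4) :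
    (Ip F 4 * X * Ip F 4) i j = X (3 - i) (3 - j) := by
  fin_cases i <;> fin_cases j <;>
    norm_num [Ip, Matrix.mul_apply, Fin.sum_univ_four,
      show ((3:Fin 4):ℕ) = 3 from rfl, show ((2:Fin 4):ℕ) = 2 from rfl,
      show ((1:Fin 4):ℕ) = 1 from rfl, show ((0:Fin 4):ℕ) = 0 from rfl,
      show (3 - ⟨2,by norm_num⟩ : Fin 4) = 1 from rfl,
      show (3 - ⟨3,by norm_num⟩ : Fin 4) = 0 from rfl, show (3 - 1 : Fin 4) = 2 from rfl]

lemma emap_uu (r : Matrix (Fin 4) (Fin 4) F) (a : F) (i j : Fin 4) :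
    emap F r a ⟨(i:ℕ), by omega⟩ ⟨(j:ℕ), by omega⟩ = r i j := by
  simp only [emap, Matrix.of_apply]
  rw [dif_pos (by omega), dif_pos (by omega)]

lemma emap_ul (r : Matrix (Fin 4) (Fin 4) F) (a : F) (i j : Fin 4) :
    emap F r a ⟨(i:ℕ), by omega⟩ ⟨(j:ℕ)+4, by omega⟩ = 0 := by
  simp only [emap, Matrix.of_apply]
  rw [dif_pos (by omega), dif_neg (by omega)]

lemma emap_lu (r : Matrix (Fin 4) (Fin 4) F) (a : F) (i j : Fin 4) :
    emap F r a ⟨(i:ℕ)+4, by omega⟩ ⟨(j:ℕ), by omega⟩ = 0 := by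
  simp only [emap, Matrix.of_apply]
  rw [dif_neg (by omega), dif_pos (by omega)]

lemma emap_ll (r : Matrix (Fin 4) (Fin 4) F) (a : F) (i j : Fin 4) :
    emap F r a ⟨(i:ℕ)+4, by omega⟩ ⟨(j:ℕ)+4, by omega⟩ = a * r⁻¹ (3 - j) (3 - i) := by
  simp only [emap, Matrix.of_apply]
  rw [dif_neg (by omega), dif_neg (by omega)]
  have h1 : (⟨(i:ℕ)+4-4, by omega⟩ : Fin 4) = i := by ext; simp
  have h2 : (⟨(j:ℕ)+4-4, by omega⟩ : Fin 4) = j := by ext; simp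
  rw [h1, h2, Ip_conj, Matrix.transpose_apply]

lemma w1_apply (M : Matrix (Fin 8) (Fin 8) F) (j : Fin 8) :
    ((e1 F - f2 F) ᵥ* M) j = M 0 j - M 6 j := by
  simp +decide [Matrix.vecMul, dotProduct, Fin.sum_univ_eight, e1, f2, Pi.single_apply]
  ring

lemma w2_apply (M : Matrix (Fin 8) (Fin 8) F) (j : Fin 8) :
    ((e2 F + f1 F) ᵥ* M) j = M 1 j + M 7 j := by
  simp +decide [Matrix.vecMul, dotProduct, Fin.sum_univ_eight, e2, f1, Pi.single_apply]

lemma mem_repB_iff (v : Fin 8 → F) :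
    v ∈ repB F ↔ v 2 = 0 ∧ v 3 = 0 ∧ v 4 = 0 ∧ v 5 = 0 ∧ v 6 = -v 0 ∧ v 7 = v 1 := by
  rw [repB, Submodule.mem_span_pair]
  constructor
  · rintro ⟨m, n, rfl⟩
    simp +decide [e1, e2, f1, f2, Pi.single_apply]
  · rintro ⟨h2, h3, h4, h5, h6, h7⟩
    refine ⟨v 0, v 1, ?_⟩
    funext j
    fin_cases j <;> simp +decide [e1, e2, f1, f2, Pi.single_apply] <;> simp_all

lemma recon (v : Fin 8 → F) (hv : v ∈ repB F) :
    v = v 0 • (e1 F - f2 F) + v 1 • (e2 F + f1 F) := by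
  obtain ⟨m, n, rfl⟩ := Submodule.mem_span_pair.mp hv
  simp +decide [e1, e2, f1, f2, Pi.single_apply]

lemma span_pair_eq (x y : Fin 8 → F) (p q u v : F) (h : p * v - q * u ≠ 0) :
    Submodule.span F {p • x + q • y, u • x + v • y} = Submodule.span F {x, y} := by
  apply le_antisymm
  · rw [Submodule.span_le]
    rintro z hz
    simp only [Set.mem_insert_iff, Set.mem_singleton_iff] at hz
    rcases hz with rfl | rfl
    · exact SetLike.mem_coe.mpr (Submodule.mem_span_pair.mpr ⟨p, q, rfl⟩)
    · exact SetLike.mem_coe.mpr (Submodule.mem_span_pair.mpr ⟨u, v, rfl⟩)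
  · rw [Submodule.span_le]
    rintro z hz
    simp only [Set.mem_insert_iff, Set.mem_singleton_iff] at hz
    rcases hz with rfl | rfl
    · refine SetLike.mem_coe.mpr (Submodule.mem_span_pair.mpr
        ⟨v / (p * v - q * u), -q / (p * v - q * u), ?_⟩)
      match_scalars
      · field_simp; linear_combination (mul_inv_cancel₀ h)
      · field_simp; ring
    · refine SetLike.mem_coe.mpr (Submodule.mem_span_pair.mpr
        ⟨-u / (p * v - q * u), p / (p * v - q * u), ?_⟩)
      match_scalars
      · field_simp; ring
      · linear_combination (mul_inv_cancel₀ h)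

lemma det_blockDiag2 (g₁ g₂ : Matrix (Fin 2) (Fin 2) F) :
    (blockDiag2 F g₁ g₂).det = g₁.det * g₂.det := by
  simp [blockDiag2, Matrix.det_succ_row_zero, Fin.sum_univ_succ, Matrix.det_fin_two,
    show ((1:Fin 4).succAbove 2 : Fin 4) = 3 from rfl]
  ring

lemma blockDiag2_mul (g₁ g₂ h₁ h₂ : Matrix (Fin 2) (Fin 2) F) :
    blockDiag2 F g₁ g₂ * blockDiag2 F h₁ h₂ = blockDiag2 F (g₁ * h₁) (g₂ * h₂) := by
  ext i j
  rw [Matrix.mul_apply, Fin.sum_univ_four]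
  fin_cases i <;> fin_cases j <;>
    simp [blockDiag2, Matrix.mul_apply, Fin.sum_univ_two, Matrix.vecHead, Matrix.vecTail]

lemma blockDiag2_one : blockDiag2 F 1 1 = (1 : Matrix (Fin 4) (Fin 4) F) := by
  ext i j
  fin_cases i <;> fin_cases j <;>
    simp +decide [blockDiag2, Matrix.one_apply, Matrix.vecHead, Matrix.vecTail]

theorem statement8 (h2 : (2 : F) ≠ 0) :
    {p : Matrix (Fin 4) (Fin 4) F × F |
        p.1.det ≠ 0 ∧ p.2 ≠ 0 ∧
        Submodule.map (Matrix.vecMulLinear (emap F p.1 p.2)) (repB F) = repB F} =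
    {p : Matrix (Fin 4) (Fin 4) F × F |
        ∃ g₁ g₂ : Matrix (Fin 2) (Fin 2) F,
          g₁.det ≠ 0 ∧ g₂.det ≠ 0 ∧ p = (blockDiag2 F g₁ g₂, g₁.det)} := by
  ext p
  simp only [Set.mem_setOf_eq]
  constructor
  · rintro ⟨hdet, ha, hmap⟩
    obtain ⟨r, a⟩ := p
    simp only at hdet ha hmap ⊢
    -- images of the two generators lie in `repB`
    have hu1S : e1 F - f2 F ∈ repB F := Submodule.subset_span (Set.mem_insert _ _)
    have hu2S : e2 F + f1 F ∈ repB F :=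
      Submodule.subset_span (Set.mem_insert_of_mem _ rfl)
    have hw1 : (e1 F - f2 F) ᵥ* emap F r a ∈ repB F := by
      have := Submodule.mem_map_of_mem (f := (emap F r a).vecMulLinear) hu1S
      rw [hmap] at this
      rwa [Matrix.vecMulLinear_apply] at this
    have hw2 : (e2 F + f1 F) ᵥ* emap F r a ∈ repB F := by
      have := Submodule.mem_map_of_mem (f := (emap F r a).vecMulLinear) hu2S
      rw [hmap] at this
      rwa [Matrix.vecMulLinear_apply] at this
    rw [mem_repB_iff] at hw1 hw2
    obtain ⟨k1, k2, k3, k4, k5, k6⟩ := hw1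
    obtain ⟨l1, l2, l3, l4, l5, l6⟩ := hw2
    simp only [w1_apply] at k1 k2 k3 k4 k5 k6
    simp only [w2_apply] at l1 l2 l3 l4 l5 l6
    simp only [
      show emap F r a 0 0 = r 0 0 from emap_uu F r a 0 0,
      show emap F r a 0 1 = r 0 1 from emap_uu F r a 0 1,
      show emap F r a 0 2 = r 0 2 from emap_uu F r a 0 2,
      show emap F r a 0 3 = r 0 3 from emap_uu F r a 0 3,
      show emap F r a 0 4 = 0 from emap_ul F r a 0 0,
      show emap F r a 0 5 = 0 from emap_ul F r a 0 1,
      show emap F r a 0 6 = 0 from emap_ul F r a 0 2,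
      show emap F r a 0 7 = 0 from emap_ul F r a 0 3,
      show emap F r a 1 0 = r 1 0 from emap_uu F r a 1 0,
      show emap F r a 1 1 = r 1 1 from emap_uu F r a 1 1,
      show emap F r a 1 2 = r 1 2 from emap_uu F r a 1 2,
      show emap F r a 1 3 = r 1 3 from emap_uu F r a 1 3,
      show emap F r a 1 4 = 0 from emap_ul F r a 1 0,
      show emap F r a 1 5 = 0 from emap_ul F r a 1 1,
      show emap F r a 1 6 = 0 from emap_ul F r a 1 2,
      show emap F r a 1 7 = 0 from emap_ul F r a 1 3,
      show emap F r a 6 0 = 0 from emap_lu F r a 2 0,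
      show emap F r a 6 1 = 0 from emap_lu F r a 2 1,
      show emap F r a 6 2 = 0 from emap_lu F r a 2 2,
      show emap F r a 6 3 = 0 from emap_lu F r a 2 3,
      show emap F r a 6 4 = a * r⁻¹ 3 1 from emap_ll F r a 2 0,
      show emap F r a 6 5 = a * r⁻¹ 2 1 from emap_ll F r a 2 1,
      show emap F r a 6 6 = a * r⁻¹ 1 1 from emap_ll F r a 2 2,
      show emap F r a 6 7 = a * r⁻¹ 0 1 from emap_ll F r a 2 3,
      show emap F r a 7 0 = 0 from emap_lu F r a 3 0,
      show emap F r a 7 1 = 0 from emap_lu F r a 3 1,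
      show emap F r a 7 2 = 0 from emap_lu F r a 3 2,
      show emap F r a 7 3 = 0 from emap_lu F r a 3 3,
      show emap F r a 7 4 = a * r⁻¹ 3 0 from emap_ll F r a 3 0,
      show emap F r a 7 5 = a * r⁻¹ 2 0 from emap_ll F r a 3 1,
      show emap F r a 7 6 = a * r⁻¹ 1 0 from emap_ll F r a 3 2,
      show emap F r a 7 7 = a * r⁻¹ 0 0 from emap_ll F r a 3 3]
      at k1 k2 k3 k4 k5 k6 l1 l2 l3 l4 l5 l6
    -- clean scalar equations
    have hr02 : r 0 2 = 0 := by linear_combination k1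
    have hr03 : r 0 3 = 0 := by linear_combination k2
    have hr12 : r 1 2 = 0 := by linear_combination l1
    have hr13 : r 1 3 = 0 := by linear_combination l2
    have hi31 : r⁻¹ 3 1 = 0 := by
      have h : a * r⁻¹ 3 1 = 0 := by linear_combination -k3
      exact (mul_eq_zero.mp h).resolve_left ha
    have hi21 : r⁻¹ 2 1 = 0 := by
      have h : a * r⁻¹ 2 1 = 0 := by linear_combination -k4
      exact (mul_eq_zero.mp h).resolve_left ha
    have hi30 : r⁻¹ 3 0 = 0 := by
      have h : a * r⁻¹ 3 0 = 0 := by linear_combination l3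
      exact (mul_eq_zero.mp h).resolve_left ha
    have hi20 : r⁻¹ 2 0 = 0 := by
      have h : a * r⁻¹ 2 0 = 0 := by linear_combination l4
      exact (mul_eq_zero.mp h).resolve_left ha
    have hp : a * r⁻¹ 1 1 = r 0 0 := by linear_combination -k5
    have hq : a * r⁻¹ 0 1 = -(r 0 1) := by linear_combination -k6
    have hu : a * r⁻¹ 1 0 = -(r 1 0) := by linear_combination l5
    have hv : a * r⁻¹ 0 0 = r 1 1 := by linear_combination l6
    -- entries of `r * r⁻¹ = 1`
    have hrr : r * r⁻¹ = 1 := Matrix.mul_nonsing_inv r (isUnit_iff_ne_zero.mpr hdet)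
    have ent : ∀ i j : Fin 4,
        r i 0 * r⁻¹ 0 j + r i 1 * r⁻¹ 1 j + r i 2 * r⁻¹ 2 j + r i 3 * r⁻¹ 3 j
          = (1 : Matrix (Fin 4) (Fin 4) F) i j := by
      intro i j
      have := congrFun (congrFun hrr i) j
      rwa [Matrix.mul_apply, Fin.sum_univ_four] at this
    have e00 : r 0 0 * r⁻¹ 0 0 + r 0 1 * r⁻¹ 1 0 + r 0 2 * r⁻¹ 2 0 + r 0 3 * r⁻¹ 3 0 = 1 := by
      have := ent 0 0; simpa using this
    have e20 : r 2 0 * r⁻¹ 0 0 + r 2 1 * r⁻¹ 1 0 + r 2 2 * r⁻¹ 2 0 + r 2 3 * r⁻¹ 3 0 = 0 := by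
      have := ent 2 0; simpa +decide [Matrix.one_apply] using this
    have e21 : r 2 0 * r⁻¹ 0 1 + r 2 1 * r⁻¹ 1 1 + r 2 2 * r⁻¹ 2 1 + r 2 3 * r⁻¹ 3 1 = 0 := by
      have := ent 2 1; simpa +decide [Matrix.one_apply] using this
    have e30 : r 3 0 * r⁻¹ 0 0 + r 3 1 * r⁻¹ 1 0 + r 3 2 * r⁻¹ 2 0 + r 3 3 * r⁻¹ 3 0 = 0 := by
      have := ent 3 0; simpa +decide [Matrix.one_apply] using this
    have e31 : r 3 0 * r⁻¹ 0 1 + r 3 1 * r⁻¹ 1 1 + r 3 2 * r⁻¹ 2 1 + r 3 3 * r⁻¹ 3 1 = 0 := by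
      have := ent 3 1; simpa +decide [Matrix.one_apply] using this
    have deta : r 0 0 * r 1 1 - r 0 1 * r 1 0 = a := by
      linear_combination a * e00 - r 0 0 * hv - r 0 1 * hu - a * r⁻¹ 2 0 * hr02
        - a * r⁻¹ 3 0 * hr03
    have E1 : r 1 1 * r 2 0 - r 1 0 * r 2 1 = 0 := by
      linear_combination a * e20 - r 2 0 * hv - r 2 1 * hu - a * r 2 2 * hi20
        - a * r 2 3 * hi30
    have E2 : r 0 0 * r 2 1 - r 0 1 * r 2 0 = 0 := by
      linear_combination a * e21 - r 2 1 * hp - r 2 0 * hq - a * r 2 2 * hi21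
        - a * r 2 3 * hi31
    have E3 : r 1 1 * r 3 0 - r 1 0 * r 3 1 = 0 := by
      linear_combination a * e30 - r 3 0 * hv - r 3 1 * hu - a * r 3 2 * hi20
        - a * r 3 3 * hi30
    have E4 : r 0 0 * r 3 1 - r 0 1 * r 3 0 = 0 := by
      linear_combination a * e31 - r 3 1 * hp - r 3 0 * hq - a * r 3 2 * hi21
        - a * r 3 3 * hi31
    have hr20 : r 2 0 = 0 := by
      have h : a * r 2 0 = 0 := by
        linear_combination r 0 0 * E1 + r 1 0 * E2 - r 2 0 * deta
      exact (mul_eq_zero.mp h).resolve_left ha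
    have hr21 : r 2 1 = 0 := by
      have h : a * r 2 1 = 0 := by
        linear_combination r 0 1 * E1 + r 1 1 * E2 - r 2 1 * deta
      exact (mul_eq_zero.mp h).resolve_left ha
    have hr30 : r 3 0 = 0 := by
      have h : a * r 3 0 = 0 := by
        linear_combination r 0 0 * E3 + r 1 0 * E4 - r 3 0 * deta
      exact (mul_eq_zero.mp h).resolve_left ha
    have hr31 : r 3 1 = 0 := by
      have h : a * r 3 1 = 0 := by
        linear_combination r 0 1 * E3 + r 1 1 * E4 - r 3 1 * deta
      exact (mul_eq_zero.mp h).resolve_left ha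
    -- assemble the blocks
    refine ⟨!![r 0 0, r 0 1; r 1 0, r 1 1], !![r 2 2, r 2 3; r 3 2, r 3 3], ?_, ?_, ?_⟩
    · rw [Matrix.det_fin_two_of, deta]; exact ha
    · have hre : r = blockDiag2 F !![r 0 0, r 0 1; r 1 0, r 1 1]
          !![r 2 2, r 2 3; r 3 2, r 3 3] := by
        ext i j
        fin_cases i <;> fin_cases j <;> first | rfl | assumption
      have : r.det = (!![r 0 0, r 0 1; r 1 0, r 1 1]).det
          * (!![r 2 2, r 2 3; r 3 2, r 3 3]).det := by
        rw [hre, det_blockDiag2, ← hre]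
      intro hzero
      apply hdet
      rw [this, hzero, mul_zero]
    · have hre : r = blockDiag2 F !![r 0 0, r 0 1; r 1 0, r 1 1]
          !![r 2 2, r 2 3; r 3 2, r 3 3] := by
        ext i j
        fin_cases i <;> fin_cases j <;> first | rfl | assumption
      rw [Prod.mk.injEq]
      exact ⟨hre, by rw [Matrix.det_fin_two_of, deta]⟩
  · rintro ⟨g1, g2, hg1, hg2, rfl⟩
    refine ⟨?_, ?_, ?_⟩
    · simp only [det_blockDiag2]
      exact mul_ne_zero hg1 hg2
    · exact hg1
    · simp only
      set r := blockDiag2 F g1 g2 with hr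
      set a := g1.det with hadef
      have i00 : g1⁻¹ 0 0 = g1.det⁻¹ * g1 1 1 := by
        rw [Matrix.inv_def, Matrix.adjugate_fin_two, Ring.inverse_eq_inv']; rfl
      have i01 : g1⁻¹ 0 1 = g1.det⁻¹ * -(g1 0 1) := by
        rw [Matrix.inv_def, Matrix.adjugate_fin_two, Ring.inverse_eq_inv']; rfl
      have i10 : g1⁻¹ 1 0 = g1.det⁻¹ * -(g1 1 0) := by
        rw [Matrix.inv_def, Matrix.adjugate_fin_two, Ring.inverse_eq_inv']; rfl
      have i11 : g1⁻¹ 1 1 = g1.det⁻¹ * g1 0 0 := by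
        rw [Matrix.inv_def, Matrix.adjugate_fin_two, Ring.inverse_eq_inv']; rfl
      have hmul : r * blockDiag2 F g1⁻¹ g2⁻¹ = 1 := by
        rw [hr, blockDiag2_mul,
          Matrix.mul_nonsing_inv g1 (isUnit_iff_ne_zero.mpr hg1),
          Matrix.mul_nonsing_inv g2 (isUnit_iff_ne_zero.mpr hg2), blockDiag2_one]
      have hinv : r⁻¹ = blockDiag2 F g1⁻¹ g2⁻¹ := Matrix.inv_eq_right_inv hmul
      -- entry values of `emap F r a`
      have E00 : emap F r a 0 0 = g1 0 0 := emap_uu F r a 0 0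
      have E01 : emap F r a 0 1 = g1 0 1 := emap_uu F r a 0 1
      have E02 : emap F r a 0 2 = 0 := emap_uu F r a 0 2
      have E03 : emap F r a 0 3 = 0 := emap_uu F r a 0 3
      have E04 : emap F r a 0 4 = 0 := emap_ul F r a 0 0
      have E05 : emap F r a 0 5 = 0 := emap_ul F r a 0 1
      have E06 : emap F r a 0 6 = 0 := emap_ul F r a 0 2
      have E07 : emap F r a 0 7 = 0 := emap_ul F r a 0 3
      have E10 : emap F r a 1 0 = g1 1 0 := emap_uu F r a 1 0
      have E11 : emap F r a 1 1 = g1 1 1 := emap_uu F r a 1 1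
      have E12 : emap F r a 1 2 = 0 := emap_uu F r a 1 2
      have E13 : emap F r a 1 3 = 0 := emap_uu F r a 1 3
      have E14 : emap F r a 1 4 = 0 := emap_ul F r a 1 0
      have E15 : emap F r a 1 5 = 0 := emap_ul F r a 1 1
      have E16 : emap F r a 1 6 = 0 := emap_ul F r a 1 2
      have E17 : emap F r a 1 7 = 0 := emap_ul F r a 1 3
      have E60 : emap F r a 6 0 = 0 := emap_lu F r a 2 0
      have E61 : emap F r a 6 1 = 0 := emap_lu F r a 2 1
      have E62 : emap F r a 6 2 = 0 := emap_lu F r a 2 2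
      have E63 : emap F r a 6 3 = 0 := emap_lu F r a 2 3
      have E64 : emap F r a 6 4 = 0 := by
        rw [show emap F r a 6 4 = a * r⁻¹ 3 1 from emap_ll F r a 2 0, hinv]
        simp [blockDiag2, Matrix.vecHead, Matrix.vecTail]
      have E65 : emap F r a 6 5 = 0 := by
        rw [show emap F r a 6 5 = a * r⁻¹ 2 1 from emap_ll F r a 2 1, hinv]
        simp [blockDiag2, Matrix.vecHead, Matrix.vecTail]
      have E66 : emap F r a 6 6 = g1 0 0 := by
        rw [show emap F r a 6 6 = a * r⁻¹ 1 1 from emap_ll F r a 2 2, hinv,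
          show blockDiag2 F g1⁻¹ g2⁻¹ 1 1 = g1⁻¹ 1 1 from rfl, i11, hadef,
          mul_inv_cancel_left₀ hg1]
      have E67 : emap F r a 6 7 = -(g1 0 1) := by
        rw [show emap F r a 6 7 = a * r⁻¹ 0 1 from emap_ll F r a 2 3, hinv,
          show blockDiag2 F g1⁻¹ g2⁻¹ 0 1 = g1⁻¹ 0 1 from rfl, i01, hadef,
          mul_inv_cancel_left₀ hg1]
      have E70 : emap F r a 7 0 = 0 := emap_lu F r a 3 0
      have E71 : emap F r a 7 1 = 0 := emap_lu F r a 3 1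
      have E72 : emap F r a 7 2 = 0 := emap_lu F r a 3 2
      have E73 : emap F r a 7 3 = 0 := emap_lu F r a 3 3
      have E74 : emap F r a 7 4 = 0 := by
        rw [show emap F r a 7 4 = a * r⁻¹ 3 0 from emap_ll F r a 3 0, hinv]
        simp [blockDiag2, Matrix.vecHead, Matrix.vecTail]
      have E75 : emap F r a 7 5 = 0 := by
        rw [show emap F r a 7 5 = a * r⁻¹ 2 0 from emap_ll F r a 3 1, hinv]
        simp [blockDiag2, Matrix.vecHead, Matrix.vecTail]
      have E76 : emap F r a 7 6 = -(g1 1 0) := by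
        rw [show emap F r a 7 6 = a * r⁻¹ 1 0 from emap_ll F r a 3 2, hinv,
          show blockDiag2 F g1⁻¹ g2⁻¹ 1 0 = g1⁻¹ 1 0 from rfl, i10, hadef,
          mul_inv_cancel_left₀ hg1]
      have E77 : emap F r a 7 7 = g1 1 1 := by
        rw [show emap F r a 7 7 = a * r⁻¹ 0 0 from emap_ll F r a 3 3, hinv,
          show blockDiag2 F g1⁻¹ g2⁻¹ 0 0 = g1⁻¹ 0 0 from rfl, i00, hadef,
          mul_inv_cancel_left₀ hg1]
      have hw1mem : (e1 F - f2 F) ᵥ* emap F r a ∈ repB F := by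
        rw [mem_repB_iff]
        refine ⟨?_, ?_, ?_, ?_, ?_, ?_⟩ <;>
          simp only [w1_apply, E00, E01, E02, E03, E04, E05, E06, E07,
            E60, E61, E62, E63, E64, E65, E66, E67] <;> ring
      have hw2mem : (e2 F + f1 F) ᵥ* emap F r a ∈ repB F := by
        rw [mem_repB_iff]
        refine ⟨?_, ?_, ?_, ?_, ?_, ?_⟩ <;>
          simp only [w2_apply, E10, E11, E12, E13, E14, E15, E16, E17,
            E70, E71, E72, E73, E74, E75, E76, E77] <;> ring
      have hw1eq : (e1 F - f2 F) ᵥ* emap F r a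
          = g1 0 0 • (e1 F - f2 F) + g1 0 1 • (e2 F + f1 F) := by
        have h0 : ((e1 F - f2 F) ᵥ* emap F r a) 0 = g1 0 0 := by
          simp only [w1_apply, E00, E60]; ring
        have h1 : ((e1 F - f2 F) ᵥ* emap F r a) 1 = g1 0 1 := by
          simp only [w1_apply, E01, E61]; ring
        conv_lhs => rw [recon F _ hw1mem]
        rw [h0, h1]
      have hw2eq : (e2 F + f1 F) ᵥ* emap F r a
          = g1 1 0 • (e1 F - f2 F) + g1 1 1 • (e2 F + f1 F) := by
        have h0 : ((e2 F + f1 F) ᵥ* emap F r a) 0 = g1 1 0 := by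
          simp only [w2_apply, E10, E70]; ring
        have h1 : ((e2 F + f1 F) ᵥ* emap F r a) 1 = g1 1 1 := by
          simp only [w2_apply, E11, E71]; ring
        conv_lhs => rw [recon F _ hw2mem]
        rw [h0, h1]
      have hD : g1 0 0 * g1 1 1 - g1 0 1 * g1 1 0 ≠ 0 := by
        rw [← Matrix.det_fin_two]; exact hg1
      conv_lhs => rw [repB]
      rw [Submodule.map_span, Set.image_pair, Matrix.vecMulLinear_apply,
        Matrix.vecMulLinear_apply, hw1eq, hw2eq,
        span_pair_eq F _ _ _ _ _ _ hD, repB]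
end
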